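/- Let L be a positive definite integral lattice of rank n+1 primitively representing A_n (i.e., containing a primitive sublattice isometric to A_n). Then L is isometric to (A_n ⊥ ℤz) + ℤ([i] + z/(n+1)) for some i with 0 ≤ i ≤ ⌊(n+1)/2⌋ and some vector z orthogonal to A_n with Q(z) = k(n+1) where k ≡ i² (mod n+1), k > 0. -/

import Mathlib

open Matrix

/-- Square integer matrices of size `n`, used as Gram matrices of lattices. -/
abbrev Mat (n : ℕ) := Matrix (Fin n) (Fin n) ℤ

/-- `G` is the Gram matrix of a positive definite integral lattice:
it is symmetric and `vᵀ G v > 0` for every nonzero integer vector `v`. -/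
def PosDefInt {n : ℕ} (G : Mat n) : Prop :=
  G.IsSymm ∧ ∀ v : Fin n → ℤ, v ≠ 0 → 0 < v ⬝ᵥ G.mulVec v

/-- The lattice with Gram matrix `L` represents the lattice with Gram matrix `N`:
there is an integral matrix `T` (whose rows are the coordinates of the images of
the basis vectors) with `T L Tᵀ = N`. -/
def Represents {m n : ℕ} (L : Mat m) (N : Mat n) : Prop :=
  ∃ T : Matrix (Fin n) (Fin m) ℤ, T * L * T.transpose = N

/-- Isometry of (positive definite) lattices, expressed as mutual representation. -/
def Isom {m n : ℕ} (A : Mat m) (B : Mat n) : Prop :=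
  Represents A B ∧ Represents B A

theorem Represents.rfl' {n : ℕ} (A : Mat n) : Represents A A :=
  ⟨1, by simp⟩

theorem Represents.trans' {a b c : ℕ} {A : Mat a} {B : Mat b} {C : Mat c}
    (h1 : Represents A B) (h2 : Represents B C) : Represents A C := by
  obtain ⟨T1, h1⟩ := h1
  obtain ⟨T2, h2⟩ := h2
  refine ⟨T2 * T1, ?_⟩
  rw [← h2, ← h1]
  simp [Matrix.mul_assoc, Matrix.transpose_mul]

/-- A positive definite integral lattice of rank `n`, given by a Gram matrix. -/
def QLat (n : ℕ) := {G : Mat n // PosDefInt G}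

instance latSetoid (n : ℕ) : Setoid (QLat n) where
  r A B := Isom A.1 B.1
  iseqv := ⟨fun A => ⟨Represents.rfl' _, Represents.rfl' _⟩,
    fun h => ⟨h.2, h.1⟩,
    fun h1 h2 => ⟨h1.1.trans' h2.1, h2.2.trans' h1.2⟩⟩

/-- Isometry classes of positive definite integral lattices of rank `n` (`Φ_n`). -/
def Cls (n : ℕ) := Quotient (latSetoid n)

/-- The isometry class of a lattice. -/
def cls {n : ℕ} (L : QLat n) : Cls n := Quotient.mk _ L

/-- A lattice represents an isometry class. -/
def RepCls {m n : ℕ} (L : QLat m) (c : Cls n) : Prop :=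
  ∃ N : QLat n, cls N = c ∧ Represents L.1 N.1

/-- The `n`-exceptional set of `L`: the classes of rank-`n` positive definite
integral lattices not represented by `L`. -/
def ExcSet (n : ℕ) {m : ℕ} (L : QLat m) : Set (Cls n) :=
  {c : Cls n | ¬ RepCls L c}
/-- Gram matrix of the root lattice `A_n` with respect to the simple roots
`α_j = e_{j-1} - e_j`. -/
def Agram (n : ℕ) : Mat n :=
  Matrix.of fun i j =>
    if i = j then 2
    else if (i : ℕ) + 1 = (j : ℕ) ∨ (j : ℕ) + 1 = (i : ℕ) then -1
    else 0

/-- Gram matrix of the lattice `(A_n ⊥ ℤz) + ℤ([i] + z/(n+1))`, where `Q(z) = k(n+1)`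
and `q = (i(n+1-i) + k)/(n+1)` is the norm of the glued vector `[i] + z/(n+1)`:
the Cartan matrix of `A_n` bordered by the row/column `B(α_j, [i]) = δ_{j, n+1-i}`
with corner entry `q`. -/
def AGlue (n i : ℕ) (q : ℤ) : Mat (n + 1) :=
  Matrix.of fun r c =>
    if hr : (r : ℕ) < n then
      if hc : (c : ℕ) < n then Agram n ⟨r, hr⟩ ⟨c, hc⟩
      else if (r : ℕ) = n - i then 1 else 0
    else
      if hc : (c : ℕ) < n then (if (c : ℕ) = n - i then 1 else 0)
      else q

/-- `L` primitively represents `N`: there is a representation whose image is a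
primitive sublattice (equivalently, the coordinate matrix `T` has an integral
right inverse). -/
def PrimRep {m n : ℕ} (L : Mat m) (N : Mat n) : Prop :=
  ∃ T : Matrix (Fin n) (Fin m) ℤ,
    T * L * T.transpose = N ∧ ∃ S : Matrix (Fin m) (Fin n) ℤ, T * S = 1


lemma exists_ker_gen {n : ℕ} (T : Matrix (Fin n) (Fin (n+1)) ℤ)
    (S : Matrix (Fin (n+1)) (Fin n) ℤ) (hTS : T * S = 1) :
    ∃ u : Fin (n+1) → ℤ, ∀ x, T.mulVec x = 0 → ∃ a : ℤ, x = a • u := by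
  set K := LinearMap.ker (Matrix.mulVecLin T) with hK
  have memK : ∀ x : Fin (n+1) → ℤ, T.mulVec x = 0 → x ∈ K := fun x hx => by
    rw [hK, LinearMap.mem_ker, Matrix.mulVecLin_apply]; exact hx
  have memK' : ∀ x : Fin (n+1) → ℤ, x ∈ K → T.mulVec x = 0 := fun x hx => by
    rw [hK, LinearMap.mem_ker, Matrix.mulVecLin_apply] at hx; exact hx
  have hST : ∀ y : Fin n → ℤ, T.mulVec (S.mulVec y) = y := by
    intro y
    rw [Matrix.mulVec_mulVec, hTS, Matrix.one_mulVec]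
  let e : (Fin (n+1) → ℤ) ≃ₗ[ℤ] (Fin n → ℤ) × K :=
    { toFun := fun x => (T.mulVec x, ⟨x - S.mulVec (T.mulVec x), memK _ (by
        rw [Matrix.mulVec_sub, hST, sub_self])⟩)
      invFun := fun p => S.mulVec p.1 + (p.2 : Fin (n+1) → ℤ)
      map_add' := by
        intro x y
        refine Prod.ext ?_ (Subtype.ext ?_)
        · show T.mulVec (x + y) = T.mulVec x + T.mulVec y
          rw [Matrix.mulVec_add]
        · show (x + y) - S.mulVec (T.mulVec (x + y)) =
            (x - S.mulVec (T.mulVec x)) + (y - S.mulVec (T.mulVec y))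
          rw [Matrix.mulVec_add, Matrix.mulVec_add]
          abel
      map_smul' := by
        intro c x
        refine Prod.ext ?_ (Subtype.ext ?_)
        · show T.mulVec (c • x) = c • T.mulVec x
          rw [Matrix.mulVec_smul]
        · show (c • x) - S.mulVec (T.mulVec (c • x)) = c • (x - S.mulVec (T.mulVec x))
          rw [Matrix.mulVec_smul, Matrix.mulVec_smul, smul_sub]
      left_inv := fun x => by
        show S.mulVec (T.mulVec x) + (x - S.mulVec (T.mulVec x)) = x
        abel
      right_inv := fun p => by
        obtain ⟨y, z⟩ := p
        have hz : T.mulVec (z : Fin (n+1) → ℤ) = 0 := memK' _ z.2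
        refine Prod.ext ?_ (Subtype.ext ?_)
        · show T.mulVec (S.mulVec y + z) = y
          rw [Matrix.mulVec_add, hST, hz, add_zero]
        · show (S.mulVec y + z) - S.mulVec (T.mulVec (S.mulVec y + z)) = (z : Fin (n+1) → ℤ)
          rw [Matrix.mulVec_add, hST, hz, add_zero]
          abel }
  have h1 : Module.finrank ℤ K = 1 := by
    have := e.finrank_eq
    rw [Module.finrank_prod, Module.finrank_pi, Module.finrank_pi] at this
    simp at this
    omega
  let b := Module.finBasisOfFinrankEq ℤ K h1
  refine ⟨(b 0 : Fin (n+1) → ℤ), fun x hx => ?_⟩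
  have hxK : x ∈ K := memK x hx
  refine ⟨b.repr ⟨x, hxK⟩ 0, ?_⟩
  have := b.sum_repr ⟨x, hxK⟩
  rw [Fin.sum_univ_one] at this
  exact congrArg Subtype.val this.symm

lemma exists_unimodular_ext {n : ℕ} (T : Matrix (Fin n) (Fin (n+1)) ℤ)
    (S : Matrix (Fin (n+1)) (Fin n) ℤ) (hTS : T * S = 1) :
    ∃ U : Matrix (Fin (n+1)) (Fin (n+1)) ℤ, IsUnit U.det ∧
      ∀ (r : Fin n) (c : Fin (n+1)), U (Fin.castSucc r) c = T r c := by
  obtain ⟨u, hu⟩ := exists_ker_gen T S hTS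
  have hker : ∀ j : Fin (n+1), T.mulVec (Pi.single j 1 - S.mulVec (T.mulVec (Pi.single j 1))) = 0 := by
    intro j
    rw [Matrix.mulVec_sub, Matrix.mulVec_mulVec, Matrix.mulVec_mulVec,
      hTS, Matrix.one_mul, sub_self]
  choose a ha using fun j => hu _ (hker j)
  set U : Matrix (Fin (n+1)) (Fin (n+1)) ℤ :=
    Matrix.of (fun r c => if h : (r:ℕ) < n then T ⟨r, h⟩ c else a c) with hU
  set M : Matrix (Fin (n+1)) (Fin (n+1)) ℤ :=
    Matrix.of (fun r c => if h : (c:ℕ) < n then S r ⟨c, h⟩ else u r) with hM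
  have hMU : M * U = 1 := by
    ext r j
    rw [Matrix.mul_apply]
    have hsplit : ∀ c : Fin (n+1), M r c * U c j =
        (if h : (c:ℕ) < n then S r ⟨c,h⟩ * T ⟨c,h⟩ j else u r * a j) := by
      intro c
      by_cases h : (c:ℕ) < n <;> simp [hU, hM, h]
    rw [Finset.sum_congr rfl (fun c _ => hsplit c), Fin.sum_univ_castSucc]
    have key := congrFun (ha j) r
    rw [Matrix.mulVec_mulVec, Matrix.mulVec_single] at key
    simp only [Pi.sub_apply, Pi.smul_apply, smul_eq_mul, Pi.single_apply, Matrix.col_apply,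
      MulOpposite.op_one, one_smul] at key
    have hsum : (∑ c : Fin n, if h : ((Fin.castSucc c):ℕ) < n
        then S r ⟨((Fin.castSucc c) : ℕ), h⟩ * T ⟨((Fin.castSucc c) : ℕ), h⟩ j else u r * a j)
        = ∑ c : Fin n, S r c * T c j := by
      refine Finset.sum_congr rfl (fun c _ => ?_)
      rw [dif_pos (by simpa using c.isLt)]
      simp
    rw [hsum, dif_neg (by simp), Matrix.one_apply]
    have hST : (∑ c : Fin n, S r c * T c j) = (S * T) r j := (Matrix.mul_apply).symm
    rw [hST]
    linear_combination -key
  refine ⟨U, ?_, ?_⟩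
  · have := congrArg Matrix.det hMU
    rw [Matrix.det_mul, Matrix.det_one] at this
    exact IsUnit.of_mul_eq_one _ ((mul_comm M.det U.det) ▸ this)
  · intro r c
    simp [hU, Fin.castSucc]

lemma tridiag_sum {n : ℕ} (g : ℕ → ℤ) (hg0 : g 0 = 0) (hgn : g (n+1) = 0) (r : Fin n) :
    ∑ c : Fin n, Agram n r c * g ((c:ℕ)+1)
      = -g (r:ℕ) + 2 * g ((r:ℕ)+1) - g ((r:ℕ)+2) := by
  have decomp : ∀ c : Fin n, Agram n r c * g ((c:ℕ)+1) =
      (if c = r then 2 * g ((r:ℕ)+1) else 0)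
      + (if (r:ℕ) = (c:ℕ)+1 then -g (r:ℕ) else 0)
      + (if (c:ℕ) = (r:ℕ)+1 then -g ((r:ℕ)+2) else 0) := by
    intro c
    unfold Agram
    rw [Matrix.of_apply]
    rcases eq_or_ne c r with h | h
    · subst h
      rw [if_pos rfl, if_pos rfl,
        if_neg (show ¬((c:ℕ) = (c:ℕ)+1) by omega),
        if_neg (show ¬((c:ℕ) = (c:ℕ)+1) by omega)]
      ring
    · have hrc : ¬ (r = c) := fun hh => h hh.symm
      have hcr : ¬ (c = r) := h
      by_cases h1 : (r:ℕ) = (c:ℕ)+1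
      · rw [if_neg hrc, if_pos (Or.inr (show (c:ℕ)+1 = (r:ℕ) by omega)),
          if_neg hcr, if_pos h1, if_neg (show ¬((c:ℕ) = (r:ℕ)+1) by omega)]
        rw [show (c:ℕ)+1 = (r:ℕ) by omega]
        ring
      · by_cases h2 : (c:ℕ) = (r:ℕ)+1
        · rw [if_neg hrc, if_pos (Or.inl (show (r:ℕ)+1 = (c:ℕ) by omega)),
            if_neg hcr, if_neg h1, if_pos h2]
          rw [show (c:ℕ)+1 = (r:ℕ)+2 by omega]
          ring
        · rw [if_neg hrc, if_neg (show ¬((r:ℕ)+1 = (c:ℕ) ∨ (c:ℕ)+1 = (r:ℕ)) by omega),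
            if_neg hcr, if_neg h1, if_neg h2]
          ring
  rw [Finset.sum_congr rfl (fun c _ => decomp c)]
  rw [Finset.sum_add_distrib, Finset.sum_add_distrib]
  have S1 : (∑ c : Fin n, if c = r then 2 * g ((r:ℕ)+1) else 0) = 2 * g ((r:ℕ)+1) := by
    rw [Finset.sum_ite_eq' Finset.univ r (fun _ => 2 * g ((r:ℕ)+1)), if_pos (Finset.mem_univ r)]
  have S2 : (∑ c : Fin n, if (r:ℕ) = (c:ℕ)+1 then -g (r:ℕ) else 0) = -g (r:ℕ) := by
    rcases Nat.eq_zero_or_pos (r:ℕ) with h0 | h0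
    · rw [Finset.sum_eq_zero (fun c _ => if_neg (by omega))]
      rw [h0, hg0]; ring
    · have hlt : (r:ℕ) - 1 < n := by omega
      set c₀ : Fin n := ⟨(r:ℕ)-1, hlt⟩ with hc₀
      have : ∀ c : Fin n, (if (r:ℕ) = (c:ℕ)+1 then -g (r:ℕ) else 0)
          = (if c = c₀ then -g (r:ℕ) else 0) := by
        intro c
        by_cases h : (r:ℕ) = (c:ℕ)+1
        · rw [if_pos h, if_pos (Fin.ext (by simp [hc₀]; omega))]
        · rw [if_neg h, if_neg (fun hh => h (by subst hh; simp [hc₀]; omega))]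
      rw [Finset.sum_congr rfl (fun c _ => this c),
        Finset.sum_ite_eq' Finset.univ c₀ (fun _ => -g (r:ℕ)), if_pos (Finset.mem_univ c₀)]
  have S3 : (∑ c : Fin n, if (c:ℕ) = (r:ℕ)+1 then -g ((r:ℕ)+2) else 0) = -g ((r:ℕ)+2) := by
    by_cases hn : (r:ℕ)+1 < n
    · set c₀ : Fin n := ⟨(r:ℕ)+1, hn⟩ with hc₀
      have : ∀ c : Fin n, (if (c:ℕ) = (r:ℕ)+1 then -g ((r:ℕ)+2) else 0)
          = (if c = c₀ then -g ((r:ℕ)+2) else 0) := by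
        intro c
        by_cases h : (c:ℕ) = (r:ℕ)+1
        · rw [if_pos h, if_pos (Fin.ext (by simp [hc₀, h]))]
        · rw [if_neg h, if_neg (fun hh => h (by subst hh; simp [hc₀]))]
      rw [Finset.sum_congr rfl (fun c _ => this c),
        Finset.sum_ite_eq' Finset.univ c₀ (fun _ => -g ((r:ℕ)+2)), if_pos (Finset.mem_univ c₀)]
    · have hr1 : (r:ℕ)+1 = n := by have := r.isLt; omega
      rw [Finset.sum_eq_zero (fun c _ => if_neg (by have := c.isLt; omega))]
      rw [show (r:ℕ)+2 = n+1 by omega, hgn]; ring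
  rw [S1, S2, S3]
  ring

/-- coefficients of (n+1)·[i] in the simple-root basis (1-indexed, with gv 0 = gv (n+1) = 0) -/
def gv (n i : ℕ) (t : ℕ) : ℤ :=
  min (t:ℤ) ((n:ℤ)+1-(i:ℕ)) * ((n:ℤ)+1 - max (t:ℤ) ((n:ℤ)+1-(i:ℕ)))

lemma gv_zero (n i : ℕ) (hi : i ≤ n) : gv n i 0 = 0 := by
  unfold gv
  rw [min_eq_left (by push_cast; omega)]
  simp

lemma gv_last (n i : ℕ) (hi : i ≤ n) : gv n i (n+1) = 0 := by
  unfold gv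
  rw [max_eq_left (by push_cast; omega)]
  push_cast
  ring

lemma gv_diff (n i : ℕ) (hi : i ≤ n) (hi1 : 1 ≤ n) (r : Fin n) :
    -gv n i (r:ℕ) + 2 * gv n i ((r:ℕ)+1) - gv n i ((r:ℕ)+2)
      = ((n:ℤ)+1) * (if (r:ℕ) = n - i then 1 else 0) := by
  set J : ℤ := (n:ℤ)+1-(i:ℕ) with hJ
  have hJ1 : 1 ≤ J := by rw [hJ]; push_cast; omega
  have hJn : J ≤ (n:ℤ)+1 := by rw [hJ]; push_cast; omega
  have hcond : ((r:ℕ) = n - i) ↔ (((r:ℕ):ℤ)+1 = J) := by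
    rw [hJ]; have := r.isLt
    constructor <;> intro h <;> [skip; skip] <;> push_cast at * <;> omega
  unfold gv
  rcases lt_trichotomy (((r:ℕ):ℤ)+1) J with hc | hc | hc
  · rw [if_neg (by rw [hcond]; omega)]
    rw [min_eq_left (by push_cast; omega), max_eq_right (by push_cast; omega),
      min_eq_left (by push_cast; omega), max_eq_right (by push_cast; omega),
      min_eq_left (by push_cast; omega), max_eq_right (by push_cast; omega)]
    push_cast
    ring
  · rw [if_pos (by rw [hcond]; omega)]
    rw [min_eq_left (by push_cast; omega), max_eq_right (by push_cast; omega),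
      min_eq_right (by push_cast; omega), max_eq_left (by push_cast; omega),
      min_eq_right (by push_cast; omega), max_eq_left (by push_cast; omega)]
    push_cast
    rw [show ((r:ℕ):ℤ) = J - 1 by omega]
    ring
  · rw [if_neg (by rw [hcond]; omega)]
    rw [min_eq_right (by push_cast; omega), max_eq_left (by push_cast; omega),
      min_eq_right (by push_cast; omega), max_eq_left (by push_cast; omega),
      min_eq_right (by push_cast; omega), max_eq_left (by push_cast; omega)]
    push_cast
    ring
lemma gv_at_glue (n i : ℕ) (hi : i ≤ n) (hi1 : 1 ≤ i) :
    gv n i (n - i + 1) = (i:ℤ) * ((n:ℤ)+1-(i:ℕ)) := by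
  unfold gv
  rw [show ((n - i + 1 : ℕ):ℤ) = (n:ℤ)+1-(i:ℕ) by push_cast; omega]
  rw [min_self, max_self]
  ring

/-- max second difference is a delta -/
lemma max_second_diff (a : ℤ) :
    max (a-1) 0 - 2 * max a 0 + max (a+1) 0 = if a = 0 then 1 else 0 := by
  rcases lt_trichotomy a 0 with h | h | h
  · rw [if_neg (by omega), max_eq_right (by omega), max_eq_right (by omega),
      max_eq_right (by omega)]
    ring
  · subst h; simp
  · rw [if_neg (by omega), max_eq_left (by omega), max_eq_left (by omega),
      max_eq_left (by omega)]
    ring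

def cfun {n : ℕ} (c0 : ℤ) (d : Fin n → ℤ) (j : ℕ) : ℤ :=
  (j:ℤ) * c0 - ∑ k : Fin n, max ((j:ℤ) - 1 - (k:ℕ)) 0 * d k

lemma cfun_zero {n : ℕ} (c0 : ℤ) (d : Fin n → ℤ) : cfun c0 d 0 = 0 := by
  unfold cfun
  rw [Finset.sum_eq_zero (fun k _ => by
    rw [max_eq_right (by push_cast; omega), zero_mul])]
  push_cast; ring

lemma cfun_last {n : ℕ} (c0 : ℤ) (d : Fin n → ℤ)
    (hc0 : ((n:ℤ)+1) * c0 = ∑ k : Fin n, ((n:ℤ) - (k:ℕ)) * d k) :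
    cfun c0 d (n+1) = 0 := by
  unfold cfun
  have hterm : ∀ k : Fin n, max (((n+1:ℕ):ℤ) - 1 - (k:ℕ)) 0 * d k = ((n:ℤ) - (k:ℕ)) * d k := by
    intro k
    rw [max_eq_left (by have := k.isLt; push_cast; omega),
      show (((n+1:ℕ):ℤ) - 1 - (k:ℕ)) = (n:ℤ) - (k:ℕ) by push_cast; ring]
  rw [Finset.sum_congr rfl (fun k _ => hterm k), ← hc0]
  push_cast
  ring

lemma cfun_diff {n : ℕ} (c0 : ℤ) (d : Fin n → ℤ) (r : Fin n) :
    -cfun c0 d (r:ℕ) + 2 * cfun c0 d ((r:ℕ)+1) - cfun c0 d ((r:ℕ)+2) = d r := by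
  unfold cfun
  push_cast
  set x : ℤ := ((r:ℕ):ℤ) with hx
  have n2 : (∑ k : Fin n, max (x + 1 - 1 - (k:ℕ)) 0 * d k)
      = ∑ k : Fin n, max (x - (k:ℕ)) 0 * d k :=
    Finset.sum_congr rfl fun k _ => by rw [show x+1-1-(k:ℕ) = x-(k:ℕ) by ring]
  have n3 : (∑ k : Fin n, max (x + 2 - 1 - (k:ℕ)) 0 * d k)
      = ∑ k : Fin n, max (x + 1 - (k:ℕ)) 0 * d k :=
    Finset.sum_congr rfl fun k _ => by rw [show x+2-1-(k:ℕ) = x+1-(k:ℕ) by ring]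
  rw [n2, n3]
  have expand : (∑ k : Fin n, (max (x - 1 - (k:ℕ)) 0 - 2 * max (x - (k:ℕ)) 0
        + max (x + 1 - (k:ℕ)) 0) * d k)
      = (∑ k : Fin n, max (x - 1 - (k:ℕ)) 0 * d k)
        - 2 * (∑ k : Fin n, max (x - (k:ℕ)) 0 * d k)
        + (∑ k : Fin n, max (x + 1 - (k:ℕ)) 0 * d k) := by
    rw [Finset.mul_sum, ← Finset.sum_sub_distrib, ← Finset.sum_add_distrib]
    exact Finset.sum_congr rfl fun k _ => by ring
  have hS : (∑ k : Fin n, (max (x - 1 - (k:ℕ)) 0 - 2 * max (x - (k:ℕ)) 0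
        + max (x + 1 - (k:ℕ)) 0) * d k) = d r := by
    have hterm : ∀ k : Fin n, (max (x - 1 - (k:ℕ)) 0 - 2 * max (x - (k:ℕ)) 0
        + max (x + 1 - (k:ℕ)) 0) * d k = if k = r then d k else 0 := by
      intro k
      have h1 : x - 1 - (k:ℕ) = (x - (k:ℕ)) - 1 := by ring
      have h2 : x + 1 - (k:ℕ)  = (x - (k:ℕ)) + 1 := by ring
      rw [h1, h2, max_second_diff (x - (k:ℕ))]
      by_cases h : k = r
      · subst h
        rw [if_pos (by rw [hx]; ring), if_pos rfl, one_mul]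
      · rw [if_neg (fun hh => h (Fin.ext (by rw [hx] at hh; omega))), if_neg h, zero_mul]
    rw [Finset.sum_congr rfl (fun k _ => hterm k), Finset.sum_ite_eq' Finset.univ r d,
      if_pos (Finset.mem_univ r)]
  rw [expand] at hS
  linarith [hS]

/-- helper: sum over `Fin (n+1)` against a `castSucc`-indicator row -/
lemma dot_ite_row {n : ℕ} (ε : ℤ) (r : Fin n) (f : Fin (n+1) → ℤ) :
    (∑ a : Fin (n+1), (if (a:ℕ) = (r:ℕ) then ε else 0) * f a) = ε * f (Fin.castSucc r) := by
  have hpt : ∀ a : Fin (n+1), (if (a:ℕ) = (r:ℕ) then ε else 0) * f a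
      = if a = Fin.castSucc r then ε * f (Fin.castSucc r) else 0 := by
    intro a
    by_cases h : (a:ℕ) = (r:ℕ)
    · have ha : a = Fin.castSucc r := Fin.ext (by simp [h])
      rw [if_pos h, if_pos ha, ha]
    · rw [if_neg h, if_neg (fun hh => h (by rw [hh]; simp)), zero_mul]
  rw [Finset.sum_congr rfl (fun a _ => hpt a), Finset.sum_ite_eq' Finset.univ
    (Fin.castSucc r) (fun _ => ε * f (Fin.castSucc r)), if_pos (Finset.mem_univ _)]

/-- helper: sum over `Fin (n+1)` against the glue row -/
lemma dot_last_row {n : ℕ} (cc : Fin n → ℤ) (f : Fin (n+1) → ℤ) :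
    (∑ a : Fin (n+1), (if h : (a:ℕ) < n then cc ⟨a, h⟩ else 1) * f a)
      = (∑ c : Fin n, cc c * f (Fin.castSucc c)) + f (Fin.last n) := by
  rw [Fin.sum_univ_castSucc]
  congr 1
  · refine Finset.sum_congr rfl fun c _ => ?_
    rw [dif_pos (show ((Fin.castSucc c : Fin (n+1)):ℕ) < n by simpa using c.isLt)]
    have hmk : (⟨((Fin.castSucc c : Fin (n+1)):ℕ), by simpa using c.isLt⟩ : Fin n) = c :=
      Fin.ext (by simp)
    rw [hmk]
  · rw [dif_neg (by simp), one_mul]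

def Wmat (n : ℕ) (ε : ℤ) (cc : Fin n → ℤ) : Matrix (Fin (n+1)) (Fin (n+1)) ℤ :=
  Matrix.of fun r s =>
    if _ : (r:ℕ) < n then (if (s:ℕ) = (r:ℕ) then ε else 0)
    else if h : (s:ℕ) < n then cc ⟨s, h⟩ else 1

lemma Wmat_row_castSucc {n : ℕ} (ε : ℤ) (cc : Fin n → ℤ) (r : Fin n) (a : Fin (n+1)) :
    Wmat n ε cc (Fin.castSucc r) a = if (a:ℕ) = (r:ℕ) then ε else 0 := by
  unfold Wmat
  rw [Matrix.of_apply, dif_pos (by simpa using r.isLt)]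
  simp

lemma Wmat_row_last {n : ℕ} (ε : ℤ) (cc : Fin n → ℤ) (a : Fin (n+1)) :
    Wmat n ε cc (Fin.last n) a = if h : (a:ℕ) < n then cc ⟨a, h⟩ else 1 := by
  unfold Wmat
  rw [Matrix.of_apply, dif_neg (by simp)]

lemma Wmat_isUnit {n : ℕ} (ε : ℤ) (hε : ε * ε = 1) (cc : Fin n → ℤ) :
    IsUnit (Wmat n ε cc).det := by
  have hWW : Wmat n ε cc * Wmat n ε (fun s => -ε * cc s) = 1 := by
    ext r j
    rw [Matrix.mul_apply]
    induction r using Fin.lastCases with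
    | last =>
      have hpt : ∀ a : Fin (n+1), Wmat n ε cc (Fin.last n) a * Wmat n ε (fun s => -ε * cc s) a j
          = (if h : (a:ℕ) < n then cc ⟨a, h⟩ else 1) * Wmat n ε (fun s => -ε * cc s) a j :=
        fun a => by rw [Wmat_row_last]
      rw [Finset.sum_congr rfl (fun a _ => hpt a),
        dot_last_row cc (fun a => Wmat n ε (fun s => -ε * cc s) a j)]
      induction j using Fin.lastCases with
      | last =>
        rw [Wmat_row_last, dif_neg (by simp), Matrix.one_apply_eq]
        rw [Finset.sum_eq_zero (fun c _ => by
          rw [Wmat_row_castSucc, if_neg (by have := c.isLt; simp; omega), mul_zero])]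
        ring
      | cast s =>
        rw [Wmat_row_last, dif_pos (show ((Fin.castSucc s : Fin (n+1)):ℕ) < n by simpa using s.isLt)]
        have hone : (1 : Matrix (Fin (n+1)) (Fin (n+1)) ℤ) (Fin.last n) (Fin.castSucc s) = 0 :=
          Matrix.one_apply_ne (by simp [Fin.ext_iff]; omega)
        rw [hone]
        have hcol : ∀ c : Fin n, cc c * Wmat n ε (fun s => -ε * cc s) (Fin.castSucc c) (Fin.castSucc s)
            = if c = s then cc c * ε else 0 := by
          intro c
          rw [Wmat_row_castSucc]
          by_cases h : c = s
          · rw [if_pos (by simp [h]), if_pos h]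
          · rw [if_neg (by simp [Fin.ext_iff] at h ⊢; omega), if_neg h, mul_zero]
        rw [Finset.sum_congr rfl (fun c _ => hcol c), Finset.sum_ite_eq' Finset.univ s
          (fun c => cc c * ε), if_pos (Finset.mem_univ _)]
        have : (⟨((Fin.castSucc s : Fin (n+1)):ℕ), by simpa using s.isLt⟩ : Fin n) = s :=
          Fin.ext (by simp)
        rw [this]
        ring
    | cast r =>
      have hpt : ∀ a : Fin (n+1), Wmat n ε cc (Fin.castSucc r) a * Wmat n ε (fun s => -ε * cc s) a j
          = (if (a:ℕ) = (r:ℕ) then ε else 0) * Wmat n ε (fun s => -ε * cc s) a j :=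
        fun a => by rw [Wmat_row_castSucc]
      rw [Finset.sum_congr rfl (fun a _ => hpt a),
        dot_ite_row ε r (fun a => Wmat n ε (fun s => -ε * cc s) a j),
        Wmat_row_castSucc]
      induction j using Fin.lastCases with
      | last =>
        rw [if_neg (by have := r.isLt; simp; omega),
          Matrix.one_apply_ne (by simp [Fin.ext_iff]; omega)]
        ring
      | cast s =>
        by_cases h : r = s
        · subst h
          rw [if_pos (by simp), Matrix.one_apply_eq, hε]
        · rw [if_neg (by simp [Fin.ext_iff] at h ⊢; omega),
            Matrix.one_apply_ne (by simp [Fin.ext_iff] at h ⊢; omega)]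
          ring
  have := congrArg Matrix.det hWW
  rw [Matrix.det_mul, Matrix.det_one] at this
  exact IsUnit.of_mul_eq_one _ this

lemma border_normalize (n : ℕ) (hn : 0 < n) (bv : Fin n → ℤ) :
    ∃ (i : ℕ) (ε : ℤ) (cc : Fin n → ℤ), i ≤ (n+1)/2 ∧ ε * ε = 1 ∧
      ∀ r : Fin n, ε * ((∑ c : Fin n, Agram n r c * cc c) + bv r)
        = (if (r:ℕ) = n - i then 1 else 0) := by
  set B : ℤ := ∑ k : Fin n, (((k:ℕ):ℤ)+1) * bv k with hB
  set r0 : ℕ := (B % ((n:ℤ)+1)).toNat with hr0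
  have hpos : (0:ℤ) < (n:ℤ)+1 := by positivity
  have hr0B : (r0:ℤ) = B % ((n:ℤ)+1) :=
    Int.toNat_of_nonneg (Int.emod_nonneg B (by omega))
  have hr0n : r0 ≤ n := by
    have h1 : B % ((n:ℤ)+1) < (n:ℤ)+1 := Int.emod_lt_of_pos B hpos
    omega
  have hBr0 : ((n:ℤ)+1) ∣ (B - (r0:ℤ)) :=
    ⟨B / ((n:ℤ)+1), by rw [hr0B, Int.emod_def]; ring⟩
  obtain ⟨i, ε, hile, hεsq, hkey⟩ : ∃ (i : ℕ) (ε : ℤ), i ≤ (n+1)/2 ∧ ε * ε = 1 ∧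
      ((n:ℤ)+1) ∣ ((i:ℤ) + ε * B) := by
    by_cases hsplit : r0 ≤ (n+1)/2
    · exact ⟨r0, -1, hsplit, by ring, by
        have : ((r0:ℤ) + -1 * B) = -(B - (r0:ℤ)) := by ring
        rw [this]; exact hBr0.neg_right⟩
    · refine ⟨n+1-r0, 1, by omega, by ring, ?_⟩
      have hcast : (((n+1-r0 : ℕ)):ℤ) = (n:ℤ)+1-(r0:ℤ) := by push_cast [Nat.cast_sub]; omega
      rw [hcast]
      have : ((n:ℤ)+1-(r0:ℤ)) + 1 * B = ((n:ℤ)+1) + (B - (r0:ℤ)) := by ring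
      rw [this]
      exact Dvd.dvd.add (dvd_refl _) hBr0
  have hin : i ≤ n := by omega
  set tv : Fin n → ℤ := fun k => if (k:ℕ) = n - i then 1 else 0 with htv
  have htvk : ∀ k : Fin n, tv k = if (k:ℕ) = n - i then 1 else 0 := fun k => rfl
  set P : ℤ := ∑ k : Fin n, (((k:ℕ):ℤ)+1) * tv k with hP
  have hPdvd : ((n:ℤ)+1) ∣ (P + (i:ℤ)) := by
    by_cases hi0 : i = 0
    · subst hi0
      have : P = 0 := Finset.sum_eq_zero (fun k _ => by
        rw [htvk k, if_neg (by have := k.isLt; omega), mul_zero])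
      rw [this]
      simp
    · have hlt : n - i < n := by omega
      set k₀ : Fin n := ⟨n - i, hlt⟩ with hk₀
      have hpt : ∀ k : Fin n, (((k:ℕ):ℤ)+1) * tv k
          = if k = k₀ then (((k:ℕ):ℤ)+1) else 0 := by
        intro k
        rw [htvk k]
        by_cases h : (k:ℕ) = n - i
        · rw [if_pos h, if_pos (Fin.ext (by simp [hk₀, h])), mul_one]
        · rw [if_neg h, if_neg (fun hh => h (by rw [hh])), mul_zero]
      rw [hP, Finset.sum_congr rfl (fun k _ => hpt k),
        Finset.sum_ite_eq' Finset.univ k₀ (fun k => (((k:ℕ):ℤ)+1)),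
        if_pos (Finset.mem_univ _)]
      have : ((k₀:ℕ):ℤ) + 1 + (i:ℤ) = (n:ℤ)+1 := by
        rw [hk₀]; push_cast; omega
      rw [this]
  set dvec : Fin n → ℤ := fun k => tv k - ε * bv k with hdvec
  have hdveck : ∀ k : Fin n, dvec k = tv k - ε * bv k := fun k => rfl
  have hφd : ((n:ℤ)+1) ∣ ∑ k : Fin n, (((k:ℕ):ℤ)+1) * dvec k := by
    have hsum : (∑ k : Fin n, (((k:ℕ):ℤ)+1) * dvec k) = P - ε * B := by
      rw [hP, hB, Finset.mul_sum, ← Finset.sum_sub_distrib]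
      exact Finset.sum_congr rfl fun k _ => by rw [hdveck k]; ring
    rw [hsum, show P - ε * B = (P + (i:ℤ)) - ((i:ℤ) + ε * B) by ring]
    exact Dvd.dvd.sub hPdvd hkey
  have hDdvd : ((n:ℤ)+1) ∣ ∑ k : Fin n, ((n:ℤ) - ((k:ℕ):ℤ)) * dvec k := by
    have hsum : (∑ k : Fin n, ((n:ℤ) - ((k:ℕ):ℤ)) * dvec k)
        = ((n:ℤ)+1) * (∑ k : Fin n, dvec k) - ∑ k : Fin n, (((k:ℕ):ℤ)+1) * dvec k := by
      rw [Finset.mul_sum, ← Finset.sum_sub_distrib]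
      exact Finset.sum_congr rfl fun k _ => by ring
    rw [hsum]
    exact Dvd.dvd.sub (Dvd.intro _ rfl) hφd
  obtain ⟨c0, hc0⟩ := hDdvd
  have hc0' : ((n:ℤ)+1) * c0 = ∑ k : Fin n, ((n:ℤ) - ((k:ℕ):ℤ)) * dvec k := hc0.symm
  refine ⟨i, ε, fun k => ε * cfun c0 dvec ((k:ℕ)+1), hile, hεsq, ?_⟩
  intro r
  have hAcc : (∑ c : Fin n, Agram n r c * (ε * cfun c0 dvec ((c:ℕ)+1)))
      = ε * dvec r := by
    have : (∑ c : Fin n, Agram n r c * (ε * cfun c0 dvec ((c:ℕ)+1)))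
        = ε * ∑ c : Fin n, Agram n r c * cfun c0 dvec ((c:ℕ)+1) := by
      rw [Finset.mul_sum]
      exact Finset.sum_congr rfl fun c _ => by ring
    rw [this, tridiag_sum (cfun c0 dvec) (cfun_zero c0 dvec) (cfun_last c0 dvec hc0') r,
      cfun_diff c0 dvec r]
  rw [hAcc, hdveck r]
  have : ε * (ε * (tv r - ε * bv r) + bv r) = (ε * ε) * tv r + (1 - ε * ε) * (ε * bv r) := by
    ring
  rw [this, hεsq, htvk r]
  ring

lemma conj_apply {A B : Type*} [Fintype B] (M : Matrix A B ℤ) (X : Matrix B B ℤ) (i j : A) :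
    (M * X * Mᵀ) i j = M i ⬝ᵥ X.mulVec (M j) := by
  simp only [Matrix.mul_apply, Matrix.transpose_apply, dotProduct, Matrix.mulVec,
    Finset.sum_mul, Finset.mul_sum]
  rw [Finset.sum_comm]
  exact Finset.sum_congr rfl fun t _ => Finset.sum_congr rfl fun s _ => by ring


/-- Any positive definite integral lattice `L` of rank `n+1` which
primitively represents `A_n` is isometric to `(A_n ⊥ ℤz) + ℤ([i] + z/(n+1))` for
some `0 ≤ i ≤ ⌊(n+1)/2⌋` and some `z ⊥ A_n` with `Q(z) = k(n+1)`, `k > 0`,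
`k ≡ i² (mod n+1)`.  (The Gram matrix of that lattice is `AGlue n i q` where
`(n+1)q = i(n+1-i) + k`.) -/
theorem primrep_An_classification (n : ℕ) (hn : 0 < n) (L : QLat (n + 1))
    (h : PrimRep L.1 (Agram n)) :
    ∃ (i k : ℕ) (q : ℤ), i ≤ (n + 1) / 2 ∧ 0 < k ∧
      (k : ZMod (n + 1)) = (i : ZMod (n + 1)) ^ 2 ∧
      ((n : ℤ) + 1) * q = (i : ℤ) * ((n : ℤ) + 1 - (i : ℤ)) + (k : ℤ) ∧
      Isom L.1 (AGlue n i q) := by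
  obtain ⟨T, hT, S, hTS⟩ := h
  obtain ⟨U, hUdet, hUrow⟩ := exists_unimodular_ext T S hTS
  set G1 : Mat (n+1) := U * L.1 * Uᵀ with hG1
  have hLsymm : L.1ᵀ = L.1 := L.2.1
  have hG1symm : G1ᵀ = G1 := by
    rw [hG1, Matrix.transpose_mul, Matrix.transpose_mul, Matrix.transpose_transpose, hLsymm,
      Matrix.mul_assoc]
  have htop : ∀ r c : Fin n, G1 (Fin.castSucc r) (Fin.castSucc c) = Agram n r c := by
    intro r c
    have h1 : U (Fin.castSucc r) = T r := funext (fun a => hUrow r a)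
    have h2 : U (Fin.castSucc c) = T c := funext (fun a => hUrow c a)
    rw [hG1, conj_apply, h1, h2, ← conj_apply, hT]
  set bv : Fin n → ℤ := fun c => G1 (Fin.last n) (Fin.castSucc c) with hbv
  have hbvk : ∀ c, bv c = G1 (Fin.last n) (Fin.castSucc c) := fun c => rfl
  have hside : ∀ c : Fin n, G1 (Fin.castSucc c) (Fin.last n) = bv c := by
    intro c
    rw [hbvk c]
    conv_rhs => rw [← hG1symm]
    rw [Matrix.transpose_apply]
  obtain ⟨i, ε, cc, hile, hεsq, hnorm⟩ := border_normalize n hn bv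
  have hin : i ≤ n := by omega
  set W : Mat (n+1) := Wmat n ε cc with hW
  set F : Mat (n+1) := W * G1 * Wᵀ with hF
  have hFsymm : Fᵀ = F := by
    rw [hF, Matrix.transpose_mul, Matrix.transpose_mul, Matrix.transpose_transpose, hG1symm,
      ← Matrix.mul_assoc]
  -- row dot products with W's rows
  have hWr : ∀ (r : Fin n) (f : Fin (n+1) → ℤ), W (Fin.castSucc r) ⬝ᵥ f
      = ε * f (Fin.castSucc r) := by
    intro r f
    rw [dotProduct, Finset.sum_congr rfl
      (fun a _ => by rw [hW, Wmat_row_castSucc]), dot_ite_row]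
  have hWl : ∀ (f : Fin (n+1) → ℤ), W (Fin.last n) ⬝ᵥ f
      = (∑ c : Fin n, cc c * f (Fin.castSucc c)) + f (Fin.last n) := by
    intro f
    rw [dotProduct, Finset.sum_congr rfl
      (fun a _ => by rw [hW, Wmat_row_last]), dot_last_row]
  have hmv_cs : ∀ (s : Fin n) (a : Fin (n+1)), (G1 *ᵥ W (Fin.castSucc s)) a
      = ε * G1 a (Fin.castSucc s) := by
    intro s a
    show G1 a ⬝ᵥ W (Fin.castSucc s) = _
    rw [dotProduct_comm, hWr]
  have hmv_l : ∀ (a : Fin (n+1)), (G1 *ᵥ W (Fin.last n)) a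
      = (∑ c : Fin n, cc c * G1 a (Fin.castSucc c)) + G1 a (Fin.last n) := by
    intro a
    show G1 a ⬝ᵥ W (Fin.last n) = _
    rw [dotProduct_comm, hWl]
  -- entries of F
  have hFtop : ∀ r s : Fin n, F (Fin.castSucc r) (Fin.castSucc s) = Agram n r s := by
    intro r s
    rw [hF, conj_apply, hWr, hmv_cs, ← htop r s]
    have : ε * (ε * G1 (Fin.castSucc r) (Fin.castSucc s))
        = (ε * ε) * G1 (Fin.castSucc r) (Fin.castSucc s) := by ring
    rw [this, hεsq, one_mul]
  have hFside : ∀ r : Fin n, F (Fin.castSucc r) (Fin.last n)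
      = (if (r:ℕ) = n - i then 1 else 0) := by
    intro r
    rw [hF, conj_apply, hWr, hmv_l, hside r]
    rw [show (∑ c : Fin n, cc c * G1 (Fin.castSucc r) (Fin.castSucc c))
        = ∑ c : Fin n, Agram n r c * cc c from
      Finset.sum_congr rfl (fun c _ => by rw [htop r c]; ring)]
    exact hnorm r
  have hFside' : ∀ s : Fin n, F (Fin.last n) (Fin.castSucc s)
      = (if (s:ℕ) = n - i then 1 else 0) := by
    intro s
    rw [← hFside s]
    conv_lhs => rw [← hFsymm]
    rw [Matrix.transpose_apply]
  set q : ℤ := F (Fin.last n) (Fin.last n) with hq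
  have hFeq : F = AGlue n i q := by
    ext a b
    unfold AGlue
    rw [Matrix.of_apply]
    induction a using Fin.lastCases with
    | last =>
      rw [dif_neg (by simp)]
      induction b using Fin.lastCases with
      | last => rw [dif_neg (by simp)]
      | cast s =>
        rw [dif_pos (show ((Fin.castSucc s : Fin (n+1)):ℕ) < n by simpa using s.isLt)]
        rw [hFside' s]
        simp
    | cast r =>
      rw [dif_pos (show ((Fin.castSucc r : Fin (n+1)):ℕ) < n by simpa using r.isLt)]
      induction b using Fin.lastCases with
      | last =>
        rw [dif_neg (by simp)]
        rw [hFside r]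
        simp
      | cast s =>
        rw [dif_pos (show ((Fin.castSucc s : Fin (n+1)):ℕ) < n by simpa using s.isLt)]
        rw [hFtop r s]
        congr 1 <;> exact Fin.ext (by simp)
  -- the isometry matrix
  set M : Mat (n+1) := W * U with hM
  have hMdet : IsUnit M.det := by
    rw [hM, Matrix.det_mul]
    exact (by rw [hW]; exact Wmat_isUnit ε hεsq cc : IsUnit W.det).mul hUdet
  have hFM : M * L.1 * Mᵀ = F := by
    rw [hF, hG1, hM, Matrix.transpose_mul]
    simp only [Matrix.mul_assoc]
  -- positivity vector
  set vv : Fin (n+1) → ℤ := fun a => if h : (a:ℕ) < n then -gv n i ((a:ℕ)+1) else (n:ℤ)+1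
    with hvv
  have hvvk : ∀ a : Fin (n+1), vv a
      = if _ : (a:ℕ) < n then -gv n i ((a:ℕ)+1) else (n:ℤ)+1 := fun a => rfl
  have hvvcs : ∀ s : Fin n, vv (Fin.castSucc s) = -gv n i ((s:ℕ)+1) := by
    intro s
    rw [hvvk _, dif_pos (show ((Fin.castSucc s : Fin (n+1)):ℕ) < n by simpa using s.isLt)]
    simp
  have hvvl : vv (Fin.last n) = (n:ℤ)+1 := by rw [hvvk _, dif_neg (by simp)]
  have hvne : vv ≠ 0 := by
    intro h0
    have := congrFun h0 (Fin.last n)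
    rw [hvvl] at this
    simp at this
    omega
  -- inner products
  have hrowdot : ∀ x : Fin (n+1) → ℤ, x ⬝ᵥ vv
      = -(∑ s : Fin n, x (Fin.castSucc s) * gv n i ((s:ℕ)+1)) + x (Fin.last n) * ((n:ℤ)+1) := by
    intro x
    rw [dotProduct, Fin.sum_univ_castSucc, hvvl]
    rw [Finset.sum_congr rfl (fun s _ => by rw [hvvcs s])]
    rw [← Finset.sum_neg_distrib]
    congr 1
    exact Finset.sum_congr rfl fun s _ => by ring
  have htridiag : ∀ r : Fin n, (∑ s : Fin n, Agram n r s * gv n i ((s:ℕ)+1))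
      = ((n:ℤ)+1) * (if (r:ℕ) = n - i then 1 else 0) := by
    intro r
    rw [tridiag_sum (gv n i) (gv_zero n i hin) (gv_last n i hin) r]
    exact gv_diff n i hin hn r
  have hinner_cs : ∀ r : Fin n, (F *ᵥ vv) (Fin.castSucc r) = 0 := by
    intro r
    show F (Fin.castSucc r) ⬝ᵥ vv = 0
    rw [hrowdot, hFside r]
    rw [Finset.sum_congr rfl (fun s _ => by rw [hFtop r s])]
    rw [htridiag r]
    ring
  have hglue_sum : (∑ s : Fin n, (if (s:ℕ) = n - i then (1:ℤ) else 0) * gv n i ((s:ℕ)+1))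
      = (i:ℤ) * ((n:ℤ)+1-(i:ℕ)) := by
    by_cases hi0 : i = 0
    · subst hi0
      rw [Finset.sum_eq_zero (fun s _ => by
        rw [if_neg (by have := s.isLt; omega), zero_mul])]
      push_cast
      ring
    · have hlt : n - i < n := by omega
      set k₀ : Fin n := ⟨n - i, hlt⟩ with hk₀
      have hpt : ∀ s : Fin n, (if (s:ℕ) = n - i then (1:ℤ) else 0) * gv n i ((s:ℕ)+1)
          = if s = k₀ then gv n i ((s:ℕ)+1) else 0 := by
        intro s
        by_cases h : (s:ℕ) = n - i
        · rw [if_pos h, if_pos (Fin.ext (by simp [hk₀, h])), one_mul]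
        · rw [if_neg h, if_neg (fun hh => h (by rw [hh])), zero_mul]
      rw [Finset.sum_congr rfl (fun s _ => hpt s),
        Finset.sum_ite_eq' Finset.univ k₀ (fun s => gv n i ((s:ℕ)+1)),
        if_pos (Finset.mem_univ _)]
      show gv n i (n - i + 1) = _
      exact gv_at_glue n i hin (by omega)
  have hinner_l : (F *ᵥ vv) (Fin.last n)
      = -((i:ℤ) * ((n:ℤ)+1-(i:ℕ))) + q * ((n:ℤ)+1) := by
    show F (Fin.last n) ⬝ᵥ vv = _
    rw [hrowdot, ← hq]
    rw [Finset.sum_congr rfl (fun s _ => by rw [hFside' s]), hglue_sum]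
  have hvFv : vv ⬝ᵥ F *ᵥ vv = ((n:ℤ)+1) * (((n:ℤ)+1) * q - (i:ℤ) * ((n:ℤ)+1-(i:ℕ))) := by
    rw [dotProduct, Fin.sum_univ_castSucc]
    rw [Finset.sum_congr rfl (fun s _ => by rw [hinner_cs s, mul_zero]), Finset.sum_const_zero,
      hinner_l, hvvl]
    ring
  -- positivity
  have hpos : 0 < vv ⬝ᵥ F *ᵥ vv := by
    have hFv : F *ᵥ vv = M *ᵥ (L.1 *ᵥ (vv ᵥ* M)) := by
      rw [← hFM, ← Matrix.mulVec_mulVec, ← Matrix.mulVec_mulVec, Matrix.mulVec_transpose]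
    rw [hFv, Matrix.dotProduct_mulVec]
    apply L.2.2
    intro h0
    have h1 : vv ᵥ* (M * M⁻¹) = vv := by
      rw [Matrix.mul_nonsing_inv M hMdet, Matrix.vecMul_one]
    rw [← Matrix.vecMul_vecMul, h0, Matrix.zero_vecMul] at h1
    exact hvne h1.symm
  have hkzpos : 0 < ((n:ℤ)+1) * q - (i:ℤ) * ((n:ℤ)+1-(i:ℕ)) := by
    rw [hvFv] at hpos
    by_contra hcon
    push_neg at hcon
    nlinarith
  set kz : ℤ := ((n:ℤ)+1) * q - (i:ℤ) * ((n:ℤ)+1-(i:ℕ)) with hkz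
  have hkznat : ((kz.toNat : ℕ) : ℤ) = kz := Int.toNat_of_nonneg (le_of_lt hkzpos)
  refine ⟨i, kz.toNat, q, hile, by omega, ?_, ?_, ?_, ?_⟩
  · -- ZMod condition
    have hcast : ((kz.toNat : ℕ) : ZMod (n+1)) = ((kz : ℤ) : ZMod (n+1)) := by
      conv_rhs => rw [← hkznat]
      rw [Int.cast_natCast]
    rw [hcast, hkz]
    have h0 : ((n : ZMod (n+1)) + 1) = 0 := by
      have := ZMod.natCast_self (n+1)
      push_cast at this
      exact this
    push_cast
    linear_combination (q - (i : ZMod (n+1))) * h0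
  · -- the equation
    rw [hkznat, hkz]
    push_cast
    ring
  · exact ⟨M, by rw [hFM, hFeq]⟩
  · refine ⟨M⁻¹, ?_⟩
    rw [← hFeq, ← hFM, Matrix.transpose_nonsing_inv]
    have hMTdet : IsUnit Mᵀ.det := by rw [Matrix.det_transpose]; exact hMdet
    calc M⁻¹ * (M * L.1 * Mᵀ) * Mᵀ⁻¹
        = (M⁻¹ * M) * L.1 * (Mᵀ * Mᵀ⁻¹) := by
          simp only [Matrix.mul_assoc]
      _ = L.1 := by
          rw [Matrix.nonsing_inv_mul M hMdet, Matrix.mul_nonsing_inv Mᵀ hMTdet,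
            Matrix.one_mul, Matrix.mul_one]
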